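/- Let E be a Dedekind σ-complete vector lattice which is a sublattice of a vector lattice F, and let {x_n} be a pairwise disjoint sequence in E such that sup_n |x_n| exists in F. Then x_n →(Fo) 0. -/
import Mathlib


/-- A net `x` in a vector lattice `F` is `F`-order convergent to `a`: there is a
nonempty downward-directed family `D` in `F` with infimum `0` (the range of a net
`y_β ↓ 0` in `F`) such that for each `d ∈ D`, eventually `|x α - a| ≤ d`. -/
def FOrderConv {F : Type*} [Lattice F] [AddCommGroup F] {ι : Type*} [Preorder ι]
    (x : ι → F) (a : F) : Prop :=
  ∃ D : Set F, D.Nonempty ∧ DirectedOn (· ≥ ·) D ∧ IsGLB D 0 ∧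
    ∀ d ∈ D, ∃ α₀ : ι, ∀ α, α₀ ≤ α → |x α - a| ≤ d

/-- Order convergence relative to a sublattice `E` of `F`: the dominating family lies
in `E` and decreases to `0` *in `E`* (`0` is its greatest lower bound among elements
of `E`). -/
def OrderConvIn {F : Type*} [Lattice F] [AddCommGroup F] (E : Set F) {ι : Type*} [Preorder ι]
    (x : ι → F) (a : F) : Prop :=
  ∃ D : Set F, D ⊆ E ∧ D.Nonempty ∧ DirectedOn (· ≥ ·) D ∧
    (0 ∈ lowerBounds D ∧ ∀ b ∈ E, b ∈ lowerBounds D → b ≤ 0) ∧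
    ∀ d ∈ D, ∃ α₀ : ι, ∀ α, α₀ ≤ α → |x α - a| ≤ d

/-- If `E` is a Dedekind σ-complete sublattice of `F` and `{x_n}` is a pairwise
disjoint sequence in `E` such that `sup_n |x_n|` exists in `F`, then `x_n →(Fo) 0`. -/
theorem fOrderConv_of_disjoint {F : Type*} [Lattice F] [AddCommGroup F]
    [CovariantClass F F (· + ·) (· ≤ ·)] [Module ℝ F]
    (E : Set F)
    (hEsup : ∀ a ∈ E, ∀ b ∈ E, a ⊔ b ∈ E) (hEinf : ∀ a ∈ E, ∀ b ∈ E, a ⊓ b ∈ E)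
    (hEadd : ∀ a ∈ E, ∀ b ∈ E, a + b ∈ E) (hEsmul : ∀ (c : ℝ), ∀ a ∈ E, c • a ∈ E)
    (hEσ : ∀ f : ℕ → F, (∀ n, f n ∈ E) → (∃ b ∈ E, ∀ n, f n ≤ b) →
      ∃ s ∈ E, s ∈ upperBounds (Set.range f) ∧
        ∀ b ∈ E, b ∈ upperBounds (Set.range f) → s ≤ b)
    (x : ℕ → F) (hx : ∀ n, x n ∈ E)
    (hdisj : ∀ m n, m ≠ n → |x m| ⊓ |x n| = 0)
    (hsup : ∃ s : F, IsLUB (Set.range fun n => |x n|) s) :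
    FOrderConv x 0 := by
  classical
  letI : DistribLattice F := AddCommGroup.toDistribLattice F
  obtain ⟨s, hs⟩ := hsup
  set t : ℕ → F := fun m => ∑ k ∈ Finset.range m, |x k| with ht
  have hxs : ∀ n, |x n| ≤ s := fun n => hs.1 ⟨n, rfl⟩
  have htsucc : ∀ m, t (m + 1) = t m + |x m| := fun m => by
    simp [ht, Finset.sum_range_succ]
  have ht0 : ∀ m, 0 ≤ t m := by
    intro m
    induction m with
    | zero => simp [ht]
    | succ m ih =>
      rw [htsucc]
      exact add_nonneg ih (abs_nonneg (x m))
  have hmono : Monotone t := monotone_nat_of_le_succ fun m => by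
    rw [htsucc]
    exact le_add_of_nonneg_right (abs_nonneg (x m))
  -- disjointness of tails from partial sums
  have hA : ∀ m, ∀ n, m ≤ n → |x n| ⊓ t m = 0 := by
    intro m
    induction m with
    | zero =>
      intro n _
      simp [ht, inf_eq_right.2 (abs_nonneg (x n))]
    | succ m ih =>
      intro n hn
      have h1 : |x n| ⊓ t m = 0 := ih n (le_trans (Nat.le_succ m) hn)
      have h2 : |x n| ⊓ |x m| = 0 := hdisj n m (by omega)
      have h3 : t m ⊓ |x m| = 0 := by
        rw [inf_comm]; exact ih m le_rfl
      have h4 : t (m + 1) = t m ⊔ |x m| := by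
        rw [htsucc, ← inf_add_sup, h3, zero_add]
      rw [h4, inf_sup_left, h1, h2, sup_idem]
  -- partial sums are below s
  have hB : ∀ m, t m ≤ s := by
    intro m
    induction m with
    | zero => simpa [ht] using le_trans (abs_nonneg (x 0)) (hxs 0)
    | succ m ih =>
      have h3 : t m ⊓ |x m| = 0 := by rw [inf_comm]; exact hA m m le_rfl
      have h4 : t (m + 1) = t m ⊔ |x m| := by
        rw [htsucc, ← inf_add_sup, h3, zero_add]
      rw [h4]; exact sup_le ih (hxs m)
  -- the key estimate
  have hkey : ∀ m n, m ≤ n → |x n| ≤ s - t m := by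
    intro m n hn
    have h1 : |x n| ⊓ t m = 0 := hA m n hn
    have h2 : |x n| + t m = |x n| ⊔ t m := by
      rw [← inf_add_sup, h1, zero_add]
    have h3 : |x n| + t m ≤ s := by
      rw [h2]; exact sup_le (hxs n) (hB m)
    exact le_sub_iff_add_le.2 h3
  have hxt : ∀ n, |x n| ≤ t (n + 1) := fun n => by
    rw [htsucc]
    exact le_add_of_nonneg_left (ht0 n)
  refine ⟨Set.range (fun m => s - t m), ⟨s - t 0, 0, rfl⟩, ?_, ?_, ?_⟩
  · rintro _ ⟨m, rfl⟩ _ ⟨k, rfl⟩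
    refine ⟨s - t (max m k), ⟨max m k, rfl⟩, ?_, ?_⟩
    · exact sub_le_sub_left (hmono (le_max_left m k)) s
    · exact sub_le_sub_left (hmono (le_max_right m k)) s
  · constructor
    · rintro _ ⟨m, rfl⟩
      exact sub_nonneg.2 (hB m)
    · intro b hb
      have h1 : ∀ n, |x n| ≤ s - b := by
        intro n
        have := hb ⟨n + 1, rfl⟩
        have h2 : t (n + 1) ≤ s - b := le_sub_comm.1 this
        exact le_trans (hxt n) h2
      have h3 : s ≤ s - b := hs.2 (by rintro _ ⟨n, rfl⟩; exact h1 n)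
      have h4 : s + b ≤ s := le_sub_iff_add_le.1 h3
      exact (add_le_iff_nonpos_right s).1 h4
  · rintro _ ⟨m, rfl⟩
    exact ⟨m, fun n hn => by simpa using hkey m n hn⟩
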